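/- Let 0 < Lint < Lext and 0 < b < Lext be real numbers, and set Φ(β) := Lext + b·cos β. Let F, G, H : ℝ → ℝ be twice continuously differentiable on an open set containing (Lint, Lext], with H > 0 and F(ℓ)·Φ(β)² + G(ℓ) > 0 on (Lint, Lext] × ℝ. Suppose G(Lext) = 0, F(Lext) = H(Lext) = 1, and F'(Lext) = F''(Lext) = G'(Lext) = G''(Lext) = 0. Then, with 𝓕(ℓ,β) := F(ℓ)·Φ(β)² + G(ℓ), there exists δ > 0 such that Z_0(ℓ,β) < 0 for all (ℓ,β) ∈ (Lext−δ, Lext) × (π−δ, π+δ); that is, the weak energy condition is violated in an open set sufficiently close to ℓ = Lext and β = π. -/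

import Mathlib

open Real Filter Set

/-- First partial derivative of `F` with respect to its first argument `ℓ`. -/
noncomputable def pdl (F : ℝ × ℝ → ℝ) (l β : ℝ) : ℝ := deriv (fun x => F (x, β)) l

/-- Second partial derivative of `F` with respect to its first argument `ℓ`. -/
noncomputable def pdll (F : ℝ × ℝ → ℝ) (l β : ℝ) : ℝ := deriv (fun x => pdl F x β) l

/-- First partial derivative of `F` with respect to its second argument `β`. -/
noncomputable def pdb (F : ℝ × ℝ → ℝ) (l β : ℝ) : ℝ := deriv (fun y => F (l, y)) β

/-- Second partial derivative of `F` with respect to its second argument `β`. -/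
noncomputable def pdbb (F : ℝ × ℝ → ℝ) (l β : ℝ) : ℝ := deriv (fun y => pdb F l y) β

/-- The scalar `Z_ϑ = G_{ab} (A_ϑ)^a (A_ϑ)^b` for the metric
`ds² = −H dτ² + dℓ² + F dα² + b² dβ²` and `A_ϑ = H^{−1/2} ∂_τ + ϑ b^{−1} ∂_β`. -/
noncomputable def Zscalar (b : ℝ) (H : ℝ → ℝ) (F : ℝ × ℝ → ℝ) (ϑ l β : ℝ) : ℝ :=
  (1 / (4 * b ^ 2)) * ((pdb F l β / F (l, β)) ^ 2 - 2 * pdbb F l β / F (l, β))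
  + ((1 - ϑ ^ 2) / 4) * ((pdl F l β / F (l, β)) ^ 2 - 2 * pdll F l β / F (l, β))
  + (ϑ ^ 2 / 4) * (2 * deriv (deriv H) l / H l - (deriv H l / H l) ^ 2
      + (deriv H l / H l) * (pdl F l β / F (l, β)))

/-- Part (i) of the Corollary of the paper: for the product ansatz
`𝓕(ℓ,β) = F(ℓ)(Lext + b cos β)² + G(ℓ)`, under the stated interpolation conditions, `Z_0 < 0`
(violation of the weak energy condition) in an open set close to `ℓ = Lext` and `β = π`. -/
theorem WEC_violated_near_external_boundary_product_ansatz
    (Lint Lext b : ℝ) (hLint : 0 < Lint) (hLL : Lint < Lext) (hb : 0 < b) (hbL : b < Lext)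
    (F G H : ℝ → ℝ)
    (U : Set ℝ) (hUopen : IsOpen U) (hUsub : Set.Ioc Lint Lext ⊆ U)
    (hF : ContDiffOn ℝ 2 F U) (hG : ContDiffOn ℝ 2 G U) (hH : ContDiffOn ℝ 2 H U)
    (hHpos : ∀ x ∈ U, 0 < H x)
    (hcalFpos : ∀ l ∈ Set.Ioc Lint Lext, ∀ β : ℝ,
      0 < F l * (Lext + b * Real.cos β) ^ 2 + G l)
    (hGext : G Lext = 0) (hFext : F Lext = 1) (hHext : H Lext = 1)
    (hF1 : deriv F Lext = 0) (hF2 : deriv (deriv F) Lext = 0)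
    (hG1 : deriv G Lext = 0) (hG2 : deriv (deriv G) Lext = 0) :
    ∃ δ > 0, ∀ l β : ℝ, l ∈ Set.Ioo (Lext - δ) Lext → β ∈ Set.Ioo (Real.pi - δ) (Real.pi + δ) →
      Zscalar b H (fun p : ℝ × ℝ => F p.1 * (Lext + b * Real.cos p.2) ^ 2 + G p.1) 0 l β < 0 := by
  have hLU : Lext ∈ U := hUsub ⟨hLL, le_refl _⟩
  set FF : ℝ × ℝ → ℝ := fun p => F p.1 * (Lext + b * Real.cos p.2) ^ 2 + G p.1 with hFFdef
  -- regularity package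
  have hF1c : ContDiffOn ℝ 1 (deriv F) U := hF.deriv_of_isOpen hUopen (by norm_num)
  have hG1c : ContDiffOn ℝ 1 (deriv G) U := hG.deriv_of_isOpen hUopen (by norm_num)
  have hFd : ∀ l ∈ U, DifferentiableAt ℝ F l := fun l hl =>
    (hF.differentiableOn (by norm_num)).differentiableAt (hUopen.mem_nhds hl)
  have hGd : ∀ l ∈ U, DifferentiableAt ℝ G l := fun l hl =>
    (hG.differentiableOn (by norm_num)).differentiableAt (hUopen.mem_nhds hl)
  have hFd1 : ∀ l ∈ U, DifferentiableAt ℝ (deriv F) l := fun l hl =>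
    (hF1c.differentiableOn one_ne_zero).differentiableAt (hUopen.mem_nhds hl)
  have hGd1 : ∀ l ∈ U, DifferentiableAt ℝ (deriv G) l := fun l hl =>
    (hG1c.differentiableOn one_ne_zero).differentiableAt (hUopen.mem_nhds hl)
  -- first partial in l
  have hpdl : ∀ l ∈ U, ∀ β : ℝ,
      pdl FF l β = deriv F l * (Lext + b * Real.cos β) ^ 2 + deriv G l := by
    intro l hl β
    simp only [pdl, hFFdef]
    exact (((hFd l hl).hasDerivAt.mul_const _).add (hGd l hl).hasDerivAt).deriv
  -- second partial in l
  have hpdll : ∀ l ∈ U, ∀ β : ℝ,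
      pdll FF l β = deriv (deriv F) l * (Lext + b * Real.cos β) ^ 2 + deriv (deriv G) l := by
    intro l hl β
    have hev : (fun x => pdl FF x β)
        =ᶠ[nhds l] fun x => deriv F x * (Lext + b * Real.cos β) ^ 2 + deriv G x := by
      filter_upwards [hUopen.mem_nhds hl] with x hx
      exact hpdl x hx β
    simp only [pdll]
    rw [hev.deriv_eq]
    exact (((hFd1 l hl).hasDerivAt.mul_const _).add (hGd1 l hl).hasDerivAt).deriv
  -- first partial in β
  have hbeta : ∀ β : ℝ, HasDerivAt (fun y => Lext + b * Real.cos y) (b * (-Real.sin β)) β :=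
    fun β => ((Real.hasDerivAt_cos β).const_mul b).const_add Lext
  have hpdb : ∀ l β : ℝ,
      pdb FF l β = F l * ((2 : ℝ) * (Lext + b * Real.cos β) ^ 1 * (b * (-Real.sin β))) := by
    intro l β
    simp only [pdb, hFFdef]
    exact ((((hbeta β).pow 2).const_mul (F l)).add_const (G l)).deriv
  -- second partial in β
  have hpdbb : ∀ l β : ℝ,
      pdbb FF l β = F l * 2 * ((b * (-Real.sin β)) * (b * (-Real.sin β))
        + (Lext + b * Real.cos β) * (b * (-Real.cos β))) := by
    intro l β
    have hfun : (fun y => pdb FF l y)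
        = fun y => F l * 2 * ((Lext + b * Real.cos y) * (b * (-Real.sin y))) := by
      funext y
      rw [hpdb l y]; ring
    have hmul : HasDerivAt (fun y => (Lext + b * Real.cos y) * (b * (-Real.sin y)))
        ((b * (-Real.sin β)) * (b * (-Real.sin β))
          + (Lext + b * Real.cos β) * (b * (-Real.cos β))) β :=
      (hbeta β).mul (((Real.hasDerivAt_sin β).neg).const_mul b)
    simp only [pdbb]
    rw [hfun]
    exact (hmul.const_mul (F l * 2)).deriv
  -- the explicit continuous function
  set g : ℝ × ℝ → ℝ := fun p =>
    (1 / (4 * b ^ 2)) * (((F p.1 * ((2 : ℝ) * (Lext + b * Real.cos p.2) ^ 1 * (b * (-Real.sin p.2))))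
        / FF p) ^ 2
      - 2 * (F p.1 * 2 * ((b * (-Real.sin p.2)) * (b * (-Real.sin p.2))
        + (Lext + b * Real.cos p.2) * (b * (-Real.cos p.2)))) / FF p)
    + (1 / 4) * (((deriv F p.1 * (Lext + b * Real.cos p.2) ^ 2 + deriv G p.1) / FF p) ^ 2
      - 2 * (deriv (deriv F) p.1 * (Lext + b * Real.cos p.2) ^ 2 + deriv (deriv G) p.1) / FF p)
    with hgdef
  have hZeq : ∀ l ∈ U, ∀ β : ℝ, Zscalar b H FF 0 l β = g (l, β) := by
    intro l hl β
    rw [hgdef]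
    simp only [Zscalar, hpdl l hl β, hpdll l hl β, hpdb l β, hpdbb l β]
    ring
  -- continuity of g at (Lext, π)
  have hcpt : ((Lext, Real.pi) : ℝ × ℝ).1 ∈ U := hLU
  have hcF : ContinuousAt (fun p : ℝ × ℝ => F p.1) (Lext, Real.pi) :=
    ((hF.continuousOn.continuousAt (hUopen.mem_nhds hLU)).comp continuousAt_fst)
  have hcG : ContinuousAt (fun p : ℝ × ℝ => G p.1) (Lext, Real.pi) :=
    ((hG.continuousOn.continuousAt (hUopen.mem_nhds hLU)).comp continuousAt_fst)
  have hcF1 : ContinuousAt (fun p : ℝ × ℝ => deriv F p.1) (Lext, Real.pi) :=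
    (ContinuousAt.comp (g := deriv F) (x := ((Lext, Real.pi) : ℝ × ℝ))
      (hF1c.continuousOn.continuousAt (hUopen.mem_nhds hLU)) continuousAt_fst)
  have hcG1 : ContinuousAt (fun p : ℝ × ℝ => deriv G p.1) (Lext, Real.pi) :=
    (ContinuousAt.comp (g := deriv G) (x := ((Lext, Real.pi) : ℝ × ℝ))
      (hG1c.continuousOn.continuousAt (hUopen.mem_nhds hLU)) continuousAt_fst)
  have hcF2 : ContinuousAt (fun p : ℝ × ℝ => deriv (deriv F) p.1) (Lext, Real.pi) :=
    (ContinuousAt.comp (g := deriv (deriv F)) (x := ((Lext, Real.pi) : ℝ × ℝ))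
      ((hF1c.continuousOn_deriv_of_isOpen hUopen le_rfl).continuousAt
      (hUopen.mem_nhds hLU)) continuousAt_fst)
  have hcG2 : ContinuousAt (fun p : ℝ × ℝ => deriv (deriv G) p.1) (Lext, Real.pi) :=
    (ContinuousAt.comp (g := deriv (deriv G)) (x := ((Lext, Real.pi) : ℝ × ℝ))
      ((hG1c.continuousOn_deriv_of_isOpen hUopen le_rfl).continuousAt
      (hUopen.mem_nhds hLU)) continuousAt_fst)
  have hccos : ContinuousAt (fun p : ℝ × ℝ => Real.cos p.2) (Lext, Real.pi) :=
    (Real.continuous_cos.continuousAt).comp continuousAt_snd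
  have hcsin : ContinuousAt (fun p : ℝ × ℝ => Real.sin p.2) (Lext, Real.pi) :=
    (Real.continuous_sin.continuousAt).comp continuousAt_snd
  have hcPhi : ContinuousAt (fun p : ℝ × ℝ => Lext + b * Real.cos p.2) (Lext, Real.pi) :=
    continuousAt_const.add (continuousAt_const.mul hccos)
  have hcFF : ContinuousAt FF (Lext, Real.pi) :=
    (hcF.mul (hcPhi.pow 2)).add hcG
  have hFFval : FF (Lext, Real.pi) = (Lext - b) ^ 2 := by
    simp [hFFdef, hFext, hGext, Real.cos_pi]; ring
  have hFFne : FF (Lext, Real.pi) ≠ 0 := by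
    rw [hFFval]
    exact pow_ne_zero _ (sub_ne_zero.mpr (ne_of_gt hbL))
  have hcg : ContinuousAt g (Lext, Real.pi) := by
    rw [hgdef]
    apply ContinuousAt.add
    · exact continuousAt_const.mul
        ((((hcF.mul ((continuousAt_const.mul (hcPhi.pow 1)).mul
            (continuousAt_const.mul hcsin.neg))).div hcFF hFFne).pow 2).sub
          ((continuousAt_const.mul ((hcF.mul continuousAt_const).mul
            (((continuousAt_const.mul hcsin.neg).mul (continuousAt_const.mul hcsin.neg)).add
              (hcPhi.mul (continuousAt_const.mul hccos.neg))))).div hcFF hFFne))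
    · exact continuousAt_const.mul
        (((((hcF1.mul (hcPhi.pow 2)).add hcG1).div hcFF hFFne).pow 2).sub
          ((continuousAt_const.mul ((hcF2.mul (hcPhi.pow 2)).add hcG2)).div hcFF hFFne))
  -- negativity at the limit point
  have hgneg : g (Lext, Real.pi) < 0 := by
    have hbne : b ≠ 0 := ne_of_gt hb
    have hLbne : Lext - b ≠ 0 := sub_ne_zero.mpr (ne_of_gt hbL)
    have hval : g (Lext, Real.pi) = -(1 / (b * (Lext - b))) := by
      simp only [hgdef, hFFval, hFext, hGext, hF1, hF2, hG1, hG2, Real.cos_pi, Real.sin_pi]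
      field_simp
      ring
    rw [hval]
    have hpos : 0 < b * (Lext - b) := mul_pos hb (sub_pos.mpr hbL)
    have := one_div_pos.mpr hpos
    linarith
  -- extract a neighborhood where g < 0
  have hnb : g ⁻¹' Set.Iio 0 ∈ nhds ((Lext, Real.pi) : ℝ × ℝ) :=
    hcg (Iio_mem_nhds hgneg)
  obtain ⟨ε₁, hε₁, hball₁⟩ := Metric.mem_nhds_iff.mp hnb
  obtain ⟨ε₂, hε₂, hball₂⟩ := Metric.isOpen_iff.mp hUopen Lext hLU
  have hδpos : (0:ℝ) < min ε₁ ε₂ := lt_min hε₁ hε₂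
  refine ⟨min ε₁ ε₂, hδpos, fun l β hlmem hβmem => ?_⟩
  have hld : |l - Lext| < min ε₁ ε₂ := by
    rw [abs_sub_lt_iff]
    constructor
    · linarith [hlmem.2, hδpos]
    · linarith [hlmem.1]
  have hβd : |β - Real.pi| < min ε₁ ε₂ := by
    rw [abs_sub_lt_iff]
    constructor
    · linarith [hβmem.2]
    · linarith [hβmem.1]
  have hlU : l ∈ U := hball₂ (by
    rw [Metric.mem_ball, Real.dist_eq]
    exact lt_of_lt_of_le hld (min_le_right _ _))
  have hdist : dist ((l, β) : ℝ × ℝ) (Lext, Real.pi) < ε₁ := by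
    rw [Prod.dist_eq]
    apply max_lt
    · rw [Real.dist_eq]; exact lt_of_lt_of_le hld (min_le_left _ _)
    · rw [Real.dist_eq]; exact lt_of_lt_of_le hβd (min_le_left _ _)
  have : g (l, β) < 0 := hball₁ (Metric.mem_ball.mpr hdist)
  rw [hZeq l hlU β]
  exact this
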